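/- Let (X, Y) be a centered bivariate Gaussian vector with Var(X) = Var(Y) = 1 and correlation ρ ∈ [-1, 1]. Then E[sign(X) · sign(Y)] = (2/π) · arcsin(ρ), where sign(0) = 0. -/

import Mathlib

open MeasureTheory ProbabilityTheory Real Set

/-- Law of a centered bivariate Gaussian vector with unit variances and correlation `ρ`:
for `|ρ| < 1` it is given by the usual density, and for `ρ = ±1` it is the law of `(X, ±X)`
where `X` is standard Gaussian. -/
noncomputable def biGaussian (ρ : ℝ) : Measure (ℝ × ℝ) :=
  if ρ = 1 then (gaussianReal 0 1).map (fun x => (x, x))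
  else if ρ = -1 then (gaussianReal 0 1).map (fun x => (x, -x))
  else (volume : Measure (ℝ × ℝ)).withDensity fun p =>
    ENNReal.ofReal ((2 * π * Real.sqrt (1 - ρ ^ 2))⁻¹ *
      Real.exp (-(p.1 ^ 2 + p.2 ^ 2 - 2 * ρ * p.1 * p.2) / (2 * (1 - ρ ^ 2))))

lemma measurable_rsign : Measurable Real.sign := by
  unfold Real.sign
  exact Measurable.ite (measurableSet_lt measurable_id measurable_const) measurable_const
    (Measurable.ite (measurableSet_lt measurable_const measurable_id) measurable_const
      measurable_const)

lemma abs_rsign_le (r : ℝ) : |Real.sign r| ≤ 1 := by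
  rcases Real.sign_apply_eq r with h | h | h <;> simp [h]

lemma rsign_mul (a b : ℝ) : Real.sign (a * b) = Real.sign a * Real.sign b := by
  rcases lt_trichotomy a 0 with ha | ha | ha <;> rcases lt_trichotomy b 0 with hb | hb | hb <;>
    simp [ha, hb, Real.sign_of_neg, Real.sign_of_pos, Real.sign_zero, mul_pos, mul_pos_of_neg_of_neg,
      mul_neg_of_pos_of_neg, mul_neg_of_neg_of_pos]

noncomputable def gss (t : ℝ) : ℝ := rexp (-t ^ 2 / 2)

lemma gss_eq : gss = fun t => rexp (-(1/2) * t ^ 2) := by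
  ext t; unfold gss; ring_nf

lemma integrable_gss : Integrable gss := by
  rw [gss_eq]; exact integrable_exp_neg_mul_sq (by norm_num)

lemma gss_pos (t : ℝ) : 0 < gss t := exp_pos _

lemma gss_cont : Continuous gss := by
  rw [gss_eq]; continuity

lemma gss_even (t : ℝ) : gss (-t) = gss t := by unfold gss; ring_nf

lemma integral_Iic_gss_neg (a : ℝ) : ∫ t in Iic (-a), gss t = ∫ t in Ioi a, gss t := by
  rw [← integral_comp_neg_Ioi]
  exact setIntegral_congr_fun measurableSet_Ioi fun x _ => gss_even x

lemma norm_sign_mul_gss_le (a t : ℝ) : ‖Real.sign (a + t) * gss t‖ ≤ gss t := by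
  rw [norm_mul]
  calc ‖Real.sign (a+t)‖ * ‖gss t‖ ≤ 1 * ‖gss t‖ := by gcongr; exact abs_rsign_le _
    _ = gss t := by rw [one_mul, norm_of_nonneg (gss_pos t).le]

lemma integrable_sign_add_mul_gss (a : ℝ) :
    Integrable fun t => Real.sign (a + t) * gss t := by
  refine integrable_gss.mono' ?_ (Filter.Eventually.of_forall fun t => norm_sign_mul_gss_le a t)
  exact ((measurable_rsign.comp (measurable_const.add measurable_id)).mul
    gss_cont.measurable).aestronglyMeasurable

lemma hval (a : ℝ) :
    ∫ t, Real.sign (a + t) * gss t = 2 * ∫ t in (0:ℝ)..a, gss t := by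
  have hint := integrable_sign_add_mul_gss a
  have hsplit := intervalIntegral.integral_Iio_add_Ici (μ := volume)
    (f := fun t => Real.sign (a + t) * gss t) (b := -a)
    hint.integrableOn hint.integrableOn
  have h1 : ∫ t in Iio (-a), Real.sign (a + t) * gss t = -∫ t in Iic (-a), gss t := by
    have e1 : ∫ t in Iio (-a), Real.sign (a + t) * gss t = ∫ t in Iio (-a), -gss t := by
      refine setIntegral_congr_fun measurableSet_Iio fun t ht => ?_
      rw [Real.sign_of_neg (by simp only [mem_Iio] at ht; linarith), neg_one_mul]
    rw [e1, integral_neg, setIntegral_congr_set Iio_ae_eq_Iic]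
  have h2 : ∫ t in Ici (-a), Real.sign (a + t) * gss t = ∫ t in Ioi (-a), gss t := by
    rw [setIntegral_congr_set (Ioi_ae_eq_Ici (a := -a)).symm]
    refine setIntegral_congr_fun measurableSet_Ioi fun t ht => ?_
    rw [Real.sign_of_pos (by simp only [mem_Ioi] at ht; linarith), one_mul]
  have h3 := intervalIntegral.integral_Iic_add_Ioi (μ := volume) (f := gss) (b := -a)
    integrable_gss.integrableOn integrable_gss.integrableOn
  have h4 := integral_Iic_gss_neg a
  have h5 := intervalIntegral.integral_Iic_add_Ioi (μ := volume) (f := gss) (b := a)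
    integrable_gss.integrableOn integrable_gss.integrableOn
  have h6 := intervalIntegral.integral_Iic_sub_Iic (μ := volume) (f := gss) (a := (0:ℝ)) (b := a)
    integrable_gss.integrableOn integrable_gss.integrableOn
  have h7 : ∫ t in Iic (0:ℝ), gss t = ∫ t in Ioi (0:ℝ), gss t := by
    simpa using integral_Iic_gss_neg 0
  have h8 := intervalIntegral.integral_Iic_add_Ioi (μ := volume) (f := gss) (b := (0:ℝ))
    integrable_gss.integrableOn integrable_gss.integrableOn
  rw [← hsplit, h1, h2, ← h6]
  linarith

lemma gss_le_one (t : ℝ) : gss t ≤ 1 := by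
  unfold gss; rw [← Real.exp_zero]; apply Real.exp_le_exp.2; nlinarith [sq_nonneg t]

lemma int_x_exp (b : ℝ) (hb : 0 < b) :
    ∫ x in Ioi (0:ℝ), x * rexp (-b * x ^ 2) = (2 * b)⁻¹ := by
  have h := integral_Ioi_of_hasDerivAt_of_tendsto
    (f := fun x => -(2*b)⁻¹ * rexp (-b * x ^ 2)) (f' := fun x => x * rexp (-b * x ^ 2))
    (a := 0) (m := 0) ?_ ?_ ?_ ?_
  · rw [h]; simp
  · exact (Continuous.continuousWithinAt (by continuity))
  · intro x _
    have h1 : HasDerivAt (fun x : ℝ => -b * x ^ 2) (-b * (2 * x)) x := by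
      simpa using ((hasDerivAt_pow 2 x).const_mul (-b))
    have h2 := (h1.exp).const_mul (-(2*b)⁻¹)
    have hb2 : (2*b)⁻¹ * (2*b) = 1 := inv_mul_cancel₀ (by positivity)
    exact h2.congr_deriv (by linear_combination (x * rexp (-b*x^2)) * hb2)
  · exact ((integrable_mul_exp_neg_mul_sq hb).integrableOn)
  · have h0 : Filter.Tendsto (fun x : ℝ => rexp (-b * x ^ 2)) Filter.atTop (nhds 0) :=
      Real.tendsto_exp_atBot.comp
        (Filter.Tendsto.const_mul_atTop_of_neg (neg_neg_iff_pos.2 hb) (Filter.tendsto_pow_atTop two_ne_zero))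
    simpa using h0.const_mul (-(2*b)⁻¹)

noncomputable def Pgss (u : ℝ) : ℝ := ∫ t in (0:ℝ)..u, gss t

lemma Pgss_deriv (u : ℝ) : HasDerivAt Pgss (gss u) u :=
  intervalIntegral.integral_hasDerivAt_right integrable_gss.intervalIntegrable
    (gss_cont.stronglyMeasurableAtFilter _ _) gss_cont.continuousAt

lemma Pgss_cont : Continuous Pgss :=
  continuous_iff_continuousAt.2 fun u => (Pgss_deriv u).continuousAt

lemma Pgss_le (u : ℝ) : |Pgss u| ≤ ∫ t, gss t := by
  unfold Pgss
  rw [← Real.norm_eq_abs]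
  calc ‖∫ t in (0:ℝ)..u, gss t‖ ≤ ∫ t in Set.uIoc (0:ℝ) u, ‖gss t‖ :=
        intervalIntegral.norm_integral_le_integral_norm_uIoc
    _ = ∫ t in Set.uIoc (0:ℝ) u, gss t := by
        refine setIntegral_congr_fun measurableSet_uIoc fun t _ => norm_of_nonneg (gss_pos t).le
    _ ≤ ∫ t, gss t := setIntegral_le_integral integrable_gss
        (Filter.Eventually.of_forall fun t => (gss_pos t).le)

noncomputable def Fc (c : ℝ) : ℝ := ∫ x in Ioi (0:ℝ), gss x * (2 * Pgss (c * x))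

lemma contF (c : ℝ) : Continuous fun x : ℝ => gss x * (2 * Pgss (c * x)) :=
  gss_cont.mul (continuous_const.mul (Pgss_cont.comp (continuous_const.mul continuous_id)))

lemma contF' (c : ℝ) : Continuous fun x : ℝ => gss x * (2 * (gss (c * x) * x)) :=
  gss_cont.mul (continuous_const.mul
    ((gss_cont.comp (continuous_const.mul continuous_id)).mul continuous_id))

lemma Fc_hasDeriv (c₀ : ℝ) : HasDerivAt Fc (2 / (1 + c₀ ^ 2)) c₀ := by
  have hbound : Integrable (fun x => 2 * |x * gss x|) (volume.restrict (Ioi 0)) := by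
    refine Integrable.restrict ?_
    refine Integrable.const_mul (Integrable.abs ?_) 2
    have := integrable_mul_exp_neg_mul_sq (b := 1/2) (by norm_num)
    exact this.congr (Filter.Eventually.of_forall fun x => by rw [gss_eq])
  have key := hasDerivAt_integral_of_dominated_loc_of_deriv_le
    (μ := volume.restrict (Ioi (0:ℝ))) (𝕜 := ℝ)
    (F := fun c x => gss x * (2 * Pgss (c * x)))
    (F' := fun c x => gss x * (2 * (gss (c * x) * x)))
    (x₀ := c₀) (s := Metric.ball c₀ 1) (bound := fun x => 2 * |x * gss x|) (Metric.ball_mem_nhds c₀ one_pos)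
    (Filter.Eventually.of_forall fun c => ((contF c).aestronglyMeasurable).restrict)
    ?_ (((contF' c₀).aestronglyMeasurable).restrict)
    ?_ hbound ?_
  · have heq : ∀ x : ℝ, gss x * (2 * (gss (c₀ * x) * x))
        = 2 * (x * rexp (-((1 + c₀ ^ 2)/2) * x ^ 2)) := by
      intro x
      calc gss x * (2 * (gss (c₀ * x) * x)) = 2*x*(rexp (-x^2/2) * rexp (-(c₀*x)^2/2)) := by
            unfold gss; ring
        _ = 2*x*rexp (-x^2/2 + -(c₀*x)^2/2) := by rw [← Real.exp_add]
        _ = 2 * (x * rexp (-((1 + c₀ ^ 2)/2) * x ^ 2)) := by ring_nf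
    have h2 := key.2
    simp only [heq] at h2
    rw [MeasureTheory.integral_const_mul, int_x_exp ((1 + c₀ ^ 2)/2) (by positivity)] at h2
    have hpos : (0:ℝ) < 1 + c₀ ^ 2 := by positivity
    have hv : (2:ℝ) * (2 * ((1 + c₀ ^ 2)/2))⁻¹ = 2 / (1 + c₀ ^ 2) := by
      field_simp
    rw [hv] at h2
    exact h2
  · refine ((integrable_gss.restrict.const_mul (2 * ∫ t, gss t))).mono'
      (((contF c₀).aestronglyMeasurable).restrict) ?_
    refine Filter.Eventually.of_forall fun x => ?_
    rw [norm_mul, norm_of_nonneg (gss_pos x).le]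
    calc gss x * ‖2 * Pgss (c₀ * x)‖ ≤ gss x * (2 * ∫ t, gss t) := by
          rw [norm_mul, Real.norm_eq_abs, Real.norm_eq_abs, abs_two]
          gcongr
          · exact (gss_pos x).le
          · exact Pgss_le _
      _ = 2 * (∫ t, gss t) * gss x := by ring
  · refine Filter.Eventually.of_forall fun x c _ => ?_
    rw [norm_mul, norm_of_nonneg (gss_pos x).le]
    have h : ‖2 * (gss (c * x) * x)‖ = 2 * (gss (c*x) * |x|) := by
      rw [norm_mul, norm_mul, Real.norm_eq_abs, Real.norm_eq_abs, Real.norm_eq_abs, abs_two,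
        abs_of_nonneg (gss_pos _).le]
    rw [h]
    have habs : (fun x => 2 * |x * gss x|) x = 2 * (|x| * gss x) := by
      simp only [abs_mul, abs_of_nonneg (gss_pos x).le]
    rw [show 2 * |x * gss x| = 2 * (|x| * gss x) from habs]
    calc gss x * (2 * (gss (c*x) * |x|)) ≤ gss x * (2 * (1 * |x|)) := by
          gcongr
          · exact (gss_pos x).le
          · exact gss_le_one _
      _ = 2 * (|x| * gss x) := by ring
  · refine Filter.Eventually.of_forall fun x c _ => ?_
    have h1 : HasDerivAt (fun c : ℝ => c * x) x c := hasDerivAt_mul_const x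
    have h2 : HasDerivAt (fun c : ℝ => Pgss (c * x)) (gss (c * x) * x) c :=
      by have := HasDerivAt.comp c (Pgss_deriv (c * x)) h1; exact this
    exact (h2.const_mul 2).const_mul (gss x)

lemma Fc_eq (c : ℝ) : Fc c = 2 * arctan c := by
  have hd : ∀ x : ℝ, HasDerivAt (fun c => Fc c - 2 * arctan c) 0 x := by
    intro x
    have h1 := (Real.hasDerivAt_arctan x).const_mul 2
    have h2 := (Fc_hasDeriv x).sub h1
    exact h2.congr_deriv (by ring)
  have hconst : ∀ x : ℝ, Fc x - 2 * arctan x = Fc 0 - 2 * arctan 0 := by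
    intro x
    have : Differentiable ℝ (fun c => Fc c - 2 * arctan c) := fun y => (hd y).differentiableAt
    exact is_const_of_deriv_eq_zero this (fun y => (hd y).deriv) x 0
  have h0 : Fc 0 = 0 := by
    unfold Fc Pgss
    simp
  have := hconst c
  rw [h0, Real.arctan_zero] at this
  linarith

lemma Pgss_odd (u : ℝ) : Pgss (-u) = -Pgss u := by
  unfold Pgss
  have h0 : ∫ t in (0:ℝ)..(-u), gss t = ∫ t in (0:ℝ)..(-u), gss (-t) :=
    intervalIntegral.integral_congr fun t _ => (gss_even t).symm
  rw [h0, intervalIntegral.integral_comp_neg, neg_neg, neg_zero,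
    intervalIntegral.integral_symm]

lemma whole_line (c : ℝ) :
    ∫ x, Real.sign x * (gss x * (2 * Pgss (c * x))) = 2 * Fc c := by
  set φ : ℝ → ℝ := fun x => Real.sign x * (gss x * (2 * Pgss (c * x))) with hφ
  have hmeas : AEStronglyMeasurable φ volume :=
    ((measurable_rsign.mul (gss_cont.measurable.mul
      ((Pgss_cont.measurable.comp (measurable_const.mul measurable_id)).const_mul 2)))).aestronglyMeasurable
  have hbd : ∀ x, ‖φ x‖ ≤ 2 * (∫ t, gss t) * gss x := by
    intro x
    rw [hφ]
    simp only [norm_mul, Real.norm_eq_abs]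
    rw [abs_of_nonneg (gss_pos x).le, abs_two]
    have hM : 0 ≤ ∫ t, gss t := integral_nonneg fun t => (gss_pos t).le
    have h1 := abs_rsign_le x
    have h2 := Pgss_le (c*x)
    have h3 := (gss_pos x).le
    have h4 := abs_nonneg (Real.sign x)
    have h5 := abs_nonneg (Pgss (c*x))
    nlinarith [mul_le_mul h1 (le_refl (gss x * (2 * |Pgss (c*x)|))) (by positivity) zero_le_one,
      mul_le_mul (le_refl (gss x * 2)) h2 h5 (by positivity)]
  have hint : Integrable φ :=
    (integrable_gss.const_mul _).mono' hmeas (Filter.Eventually.of_forall hbd)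
  have heven : ∀ x, φ (-x) = φ x := by
    intro x
    rw [hφ]
    simp only [Real.sign_neg, gss_even, mul_neg, Pgss_odd]
    ring
  have hsplit := intervalIntegral.integral_Iic_add_Ioi (μ := volume) (f := φ) (b := 0)
    hint.integrableOn hint.integrableOn
  have h1 : ∫ x in Iic (0:ℝ), φ x = ∫ x in Ioi (0:ℝ), φ x := by
    have hni := integral_comp_neg_Ioi (c := 0) (f := φ)
    rw [neg_zero] at hni
    rw [← hni]
    simp only [heven]
  have h2 : ∫ x in Ioi (0:ℝ), φ x = Fc c := by
    unfold Fc
    refine setIntegral_congr_fun measurableSet_Ioi fun x hx => ?_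
    rw [hφ]
    simp only
    rw [Real.sign_of_pos hx, one_mul]
  rw [← hsplit, h1, h2]
  ring

lemma hvalP (a : ℝ) : ∫ t, Real.sign (a + t) * gss t = 2 * Pgss a := hval a

lemma twoD (ρ : ℝ) (hm : -1 < ρ) (hp : ρ < 1) :
    ∫ p : ℝ × ℝ, Real.sign p.1 * Real.sign p.2 *
      ((2 * π * Real.sqrt (1 - ρ ^ 2))⁻¹ *
        rexp (-(p.1 ^ 2 + p.2 ^ 2 - 2 * ρ * p.1 * p.2) / (2 * (1 - ρ ^ 2))))
    = (2 / π) * Real.arcsin ρ := by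
  have hρ2 : 0 < 1 - ρ ^ 2 := by nlinarith
  set s : ℝ := Real.sqrt (1 - ρ ^ 2) with hs_def
  have hs : 0 < s := Real.sqrt_pos.2 hρ2
  have hs2 : s ^ 2 = 1 - ρ ^ 2 := Real.sq_sqrt hρ2.le
  set c : ℝ := ρ / s with hc_def
  have hsc : s * c = ρ := by rw [hc_def]; field_simp
  set f : ℝ × ℝ → ℝ := fun p => (2 * π * s)⁻¹ *
      rexp (-(p.1 ^ 2 + p.2 ^ 2 - 2 * ρ * p.1 * p.2) / (2 * (1 - ρ ^ 2))) with hf_def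
  have hf_cont : Continuous f := by
    apply continuous_const.mul
    apply Real.continuous_exp.comp
    fun_prop
  have hπs : (0:ℝ) < 2 * π * s := by positivity
  have hf_nonneg : ∀ p, 0 ≤ f p := fun p =>
    mul_nonneg (inv_nonneg.2 hπs.le) (Real.exp_pos _).le
  set D : ℝ × ℝ → ℝ := fun p => Real.sign p.1 * Real.sign p.2 * f p with hD_def
  have hD_meas : AEStronglyMeasurable D (volume : Measure (ℝ × ℝ)) := by
    apply Measurable.aestronglyMeasurable
    exact ((measurable_rsign.comp measurable_fst).mul
      (measurable_rsign.comp measurable_snd)).mul hf_cont.measurable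
  set a : ℝ := (2 * (1 + |ρ|))⁻¹ with ha_def
  have ha : 0 < a := by rw [ha_def]; positivity
  have hDbd : ∀ p : ℝ × ℝ, ‖D p‖ ≤ (2 * π * s)⁻¹ * (rexp (-a * p.1 ^ 2) * rexp (-a * p.2 ^ 2)) := by
    rintro ⟨x, y⟩
    have hrabs : |ρ| < 1 := abs_lt.2 ⟨hm, hp⟩
    have h1ρ : (0:ℝ) < 1 + |ρ| := by positivity
    have hQ : (1 - |ρ|) * (x ^ 2 + y ^ 2) ≤ x ^ 2 + y ^ 2 - 2 * ρ * x * y := by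
      have h1 : 2 * ρ * x * y ≤ |ρ| * (x ^ 2 + y ^ 2) := by
        have h0 : 2 * ρ * x * y ≤ |2 * ρ * x * y| := le_abs_self _
        rw [abs_mul, abs_mul, abs_mul, abs_two] at h0
        nlinarith [sq_nonneg (|x| - |y|), abs_nonneg ρ, sq_abs x, sq_abs y,
          abs_nonneg x, abs_nonneg y]
      nlinarith
    have hexp : rexp (-(x ^ 2 + y ^ 2 - 2 * ρ * x * y) / (2 * (1 - ρ ^ 2)))
        ≤ rexp (-a * x ^ 2) * rexp (-a * y ^ 2) := by
      rw [← Real.exp_add]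
      apply Real.exp_le_exp.2
      have hfact : 1 - ρ ^ 2 = (1 - |ρ|) * (1 + |ρ|) := by rw [← sq_abs]; ring
      have key : (x ^ 2 + y ^ 2) * (2 * (1 - ρ ^ 2))
          ≤ (x ^ 2 + y ^ 2 - 2 * ρ * x * y) * (2 * (1 + |ρ|)) := by
        rw [hfact]; nlinarith [hQ, h1ρ.le]
      have h5 : (x ^ 2 + y ^ 2) / (2 * (1 + |ρ|))
          ≤ (x ^ 2 + y ^ 2 - 2 * ρ * x * y) / (2 * (1 - ρ ^ 2)) :=
        (div_le_div_iff₀ (by positivity) (by positivity)).2 key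
      have e : -a * x ^ 2 + -a * y ^ 2 = -((x ^ 2 + y ^ 2) * a) := by ring
      rw [e, ha_def]
      have e2 : (x ^ 2 + y ^ 2) * (2 * (1 + |ρ|))⁻¹ = (x ^ 2 + y ^ 2) / (2 * (1 + |ρ|)) := by
        ring
      rw [e2]
      have e3 : -(x ^ 2 + y ^ 2 - 2 * ρ * x * y) / (2 * (1 - ρ ^ 2))
          = -((x ^ 2 + y ^ 2 - 2 * ρ * x * y) / (2 * (1 - ρ ^ 2))) := by ring
      rw [e3]
      linarith
    have hD1 : ‖D (x, y)‖ ≤ f (x, y) := by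
      rw [hD_def]
      simp only [norm_mul, Real.norm_eq_abs]
      calc |Real.sign x| * |Real.sign y| * |f (x, y)|
          ≤ 1 * 1 * |f (x, y)| := by
            gcongr
            · exact abs_rsign_le x
            · exact abs_rsign_le y
        _ = f (x, y) := by rw [one_mul, one_mul, abs_of_nonneg (hf_nonneg _)]
    refine hD1.trans ?_
    rw [hf_def]
    exact mul_le_mul_of_nonneg_left hexp (inv_nonneg.2 hπs.le)
  have hDint : Integrable D (volume : Measure (ℝ × ℝ)) := by
    have hbint : Integrable (fun p : ℝ × ℝ => (2 * π * s)⁻¹ *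
        (rexp (-a * p.1 ^ 2) * rexp (-a * p.2 ^ 2))) (volume : Measure (ℝ × ℝ)) := by
      rw [MeasureTheory.Measure.volume_eq_prod]
      exact ((integrable_exp_neg_mul_sq ha).mul_prod (integrable_exp_neg_mul_sq ha)).const_mul _
    exact hbint.mono' hD_meas (Filter.Eventually.of_forall hDbd)
  have hfub : ∫ p : ℝ × ℝ, D p = ∫ x : ℝ, ∫ y : ℝ, D (x, y) := by
    rw [MeasureTheory.Measure.volume_eq_prod]
    exact MeasureTheory.integral_prod D (by rwa [← MeasureTheory.Measure.volume_eq_prod])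
  have hinner : ∀ x : ℝ, ∫ y : ℝ, D (x, y)
      = (2 * π)⁻¹ * (Real.sign x * (gss x * (2 * Pgss (c * x)))) := by
    intro x
    have hDxy : ∀ y : ℝ, D (x, y) = (Real.sign x * (2 * π * s)⁻¹ * gss x) *
        (Real.sign y * rexp (-(y - ρ * x) ^ 2 / (2 * s ^ 2))) := by
      intro y
      rw [hD_def, hf_def]
      simp only
      rw [show rexp (-(x ^ 2 + y ^ 2 - 2 * ρ * x * y) / (2 * (1 - ρ ^ 2)))
          = gss x * rexp (-(y - ρ * x) ^ 2 / (2 * s ^ 2)) from ?_]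
      · ring
      · unfold gss
        rw [← Real.exp_add]
        congr 1
        rw [← hs2]
        have hs2' : (2 * s ^ 2) ≠ 0 := (mul_pos two_pos (pow_pos hs 2)).ne'
        rw [div_add_div _ _ two_ne_zero hs2', div_eq_div_iff hs2' (mul_ne_zero two_ne_zero hs2')]
        linear_combination (4 * s ^ 2 * x ^ 2) * hs2
    rw [integral_congr_ae (Filter.Eventually.of_forall hDxy), MeasureTheory.integral_const_mul]
    have hsub : ∫ y : ℝ, Real.sign y * rexp (-(y - ρ * x) ^ 2 / (2 * s ^ 2))
        = s * (2 * Pgss (c * x)) := by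
      have h1 : ∫ y : ℝ, Real.sign y * rexp (-(y - ρ * x) ^ 2 / (2 * s ^ 2))
          = ∫ u : ℝ, Real.sign (u + ρ * x) * rexp (-u ^ 2 / (2 * s ^ 2)) := by
        rw [← integral_add_right_eq_self
          (fun y => Real.sign y * rexp (-(y - ρ * x) ^ 2 / (2 * s ^ 2))) (ρ * x)]
        congr 1
        ext u
        simp only [add_sub_cancel_right]
      have h2 : ∀ t : ℝ, Real.sign (s * t + ρ * x) * rexp (-(s * t) ^ 2 / (2 * s ^ 2))
          = Real.sign (c * x + t) * gss t := by
        intro t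
        have e1 : s * t + ρ * x = s * (c * x + t) := by rw [← hsc]; ring
        have e2 : rexp (-(s * t) ^ 2 / (2 * s ^ 2)) = gss t := by
          unfold gss
          congr 1
          field_simp
        rw [e1, rsign_mul, Real.sign_of_pos hs, one_mul, e2]
      have h3 := MeasureTheory.Measure.integral_comp_mul_left
        (g := fun u => Real.sign (u + ρ * x) * rexp (-u ^ 2 / (2 * s ^ 2))) s
      have h4 : ∫ t : ℝ, Real.sign (s * t + ρ * x) * rexp (-(s * t) ^ 2 / (2 * s ^ 2))
          = 2 * Pgss (c * x) := by
        rw [show (fun t : ℝ => Real.sign (s * t + ρ * x) * rexp (-(s * t) ^ 2 / (2 * s ^ 2)))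
            = fun t : ℝ => Real.sign (c * x + t) * gss t from funext h2]
        exact hvalP (c * x)
      rw [h3] at h4
      rw [abs_of_pos (inv_pos.2 hs), smul_eq_mul] at h4
      rw [h1, ← h4]
      field_simp
    rw [hsub]
    field_simp
  have harc : arctan c = arcsin ρ := by
    rw [Real.arctan_eq_arcsin]
    congr 1
    have e1 : 1 + c ^ 2 = (1 / s) ^ 2 := by
      rw [hc_def]
      field_simp
      nlinarith [hs2]
    rw [e1, Real.sqrt_sq (by positivity)]
    rw [hc_def]
    field_simp
  calc ∫ p : ℝ × ℝ, Real.sign p.1 * Real.sign p.2 *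
        ((2 * π * s)⁻¹ * rexp (-(p.1 ^ 2 + p.2 ^ 2 - 2 * ρ * p.1 * p.2) / (2 * (1 - ρ ^ 2))))
      = ∫ p : ℝ × ℝ, D p := by rw [hD_def, hf_def]
    _ = ∫ x : ℝ, ∫ y : ℝ, D (x, y) := hfub
    _ = ∫ x : ℝ, (2 * π)⁻¹ * (Real.sign x * (gss x * (2 * Pgss (c * x)))) :=
        integral_congr_ae (Filter.Eventually.of_forall hinner)
    _ = (2 * π)⁻¹ * ∫ x : ℝ, Real.sign x * (gss x * (2 * Pgss (c * x))) :=
        MeasureTheory.integral_const_mul _ _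
    _ = (2 * π)⁻¹ * (2 * Fc c) := by rw [whole_line]
    _ = (2 / π) * Real.arcsin ρ := by
        rw [Fc_eq, harc]
        have hπ : π ≠ 0 := Real.pi_ne_zero
        field_simp

theorem sign_mul_sign_expectation {Ω : Type*} [MeasurableSpace Ω] (μ : Measure Ω)
    [IsProbabilityMeasure μ] (X Y : Ω → ℝ) (hX : Measurable X) (hY : Measurable Y)
    (ρ : ℝ) (hρ : ρ ∈ Set.Icc (-1 : ℝ) 1)
    (hlaw : μ.map (fun ω => (X ω, Y ω)) = biGaussian ρ) :
    ∫ ω, Real.sign (X ω) * Real.sign (Y ω) ∂μ = (2 / π) * Real.arcsin ρ := by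
  have hXY : Measurable fun ω => (X ω, Y ω) := hX.prodMk hY
  have hsgn : Measurable fun p : ℝ × ℝ => Real.sign p.1 * Real.sign p.2 :=
    (measurable_rsign.comp measurable_fst).mul (measurable_rsign.comp measurable_snd)
  have hmap : ∫ ω, Real.sign (X ω) * Real.sign (Y ω) ∂μ
      = ∫ p : ℝ × ℝ, Real.sign p.1 * Real.sign p.2 ∂(biGaussian ρ) := by
    rw [← hlaw, integral_map hXY.aemeasurable hsgn.aestronglyMeasurable]
  rw [hmap]
  rcases eq_or_lt_of_le hρ.2 with h1 | h1
  · -- ρ = 1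
    rw [h1] at *
    rw [biGaussian, if_pos rfl]
    have hmm : AEMeasurable (fun x : ℝ => (x, x)) (gaussianReal 0 1) :=
      aemeasurable_id.prodMk aemeasurable_id
    rw [integral_map hmm hsgn.aestronglyMeasurable]
    simp only
    have hae : ∀ᵐ x ∂(gaussianReal 0 1), Real.sign x * Real.sign x = 1 := by
      have h0 : (gaussianReal 0 1) {0} = 0 :=
        gaussianReal_absolutelyContinuous 0 one_ne_zero (volume_singleton)
      filter_upwards [measure_eq_zero_iff_ae_notMem.1 h0] with x hx
      rcases Real.sign_apply_eq_of_ne_zero x (by simpa using hx) with h | h <;> rw [h] <;> norm_num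
    rw [integral_congr_ae hae, integral_const, probReal_univ]
    simp only [ENNReal.toReal_one, smul_eq_mul, one_mul, Real.arcsin_one]
    field_simp
  · rcases eq_or_lt_of_le hρ.1 with h2 | h2
    · -- ρ = -1
      rw [← h2] at *
      rw [biGaussian, if_neg (by norm_num), if_pos rfl]
      have hmm : AEMeasurable (fun x : ℝ => (x, -x)) (gaussianReal 0 1) :=
        (measurable_id.prodMk measurable_id.neg).aemeasurable
      rw [integral_map hmm hsgn.aestronglyMeasurable]
      simp only
      have hae : ∀ᵐ x ∂(gaussianReal 0 1), Real.sign x * Real.sign (-x) = -1 := by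
        have h0 : (gaussianReal 0 1) {0} = 0 :=
          gaussianReal_absolutelyContinuous 0 one_ne_zero (volume_singleton)
        filter_upwards [measure_eq_zero_iff_ae_notMem.1 h0] with x hx
        rw [Real.sign_neg]
        rcases Real.sign_apply_eq_of_ne_zero x (by simpa using hx) with h | h <;> rw [h] <;> norm_num
      rw [integral_congr_ae hae, integral_const, probReal_univ]
      simp only [ENNReal.toReal_one, smul_eq_mul, one_mul, Real.arcsin_neg, Real.arcsin_one]
      field_simp
    · -- -1 < ρ < 1
      rw [biGaussian, if_neg h1.ne, if_neg h2.ne']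
      set f : ℝ × ℝ → ℝ := fun p => (2 * π * Real.sqrt (1 - ρ ^ 2))⁻¹ *
        rexp (-(p.1 ^ 2 + p.2 ^ 2 - 2 * ρ * p.1 * p.2) / (2 * (1 - ρ ^ 2))) with hf_def
      have hf_nonneg : ∀ p, 0 ≤ f p := by
        intro p
        have hρ2 : 0 < 1 - ρ ^ 2 := by nlinarith
        have : (0:ℝ) < 2 * π * Real.sqrt (1 - ρ ^ 2) := by
          have := Real.sqrt_pos.2 hρ2
          positivity
        exact mul_nonneg (inv_nonneg.2 this.le) (Real.exp_pos _).le
      have hf_meas : Measurable fun p => (f p).toNNReal := by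
        apply Measurable.real_toNNReal
        apply Continuous.measurable
        apply continuous_const.mul
        apply Real.continuous_exp.comp
        fun_prop
      have hwd : (volume : Measure (ℝ × ℝ)).withDensity
            (fun p => ENNReal.ofReal (f p))
          = (volume : Measure (ℝ × ℝ)).withDensity (fun p => ((f p).toNNReal : ENNReal)) := rfl
      rw [hwd, integral_withDensity_eq_integral_smul hf_meas]
      have : ∀ p : ℝ × ℝ, (f p).toNNReal • (Real.sign p.1 * Real.sign p.2)
          = Real.sign p.1 * Real.sign p.2 * f p := by
        intro p
        have hc : ((f p).toNNReal : ℝ) = f p := Real.coe_toNNReal _ (hf_nonneg p)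
        rw [NNReal.smul_def, hc, smul_eq_mul]
        ring
      rw [integral_congr_ae (Filter.Eventually.of_forall this)]
      exact twoD ρ h2 h1
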